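/- The storage feasible set B is nonempty if and only if for every t, charging at maximal allowed power reaches at least S̲_t and charging at minimal allowed power stays below S̄_t; formally, B ≠ ∅ iff the greedy maximal trajectory satisfies all lower energy bounds and the greedy minimal trajectory satisfies all upper energy bounds, under the additional assumptions x̲ ≤ x̄ and that the interval bounds [S̲_t, S̄_t] are consistent, i.e., for each t, max(S̲_t, α S̲_{t-1} + x̲_t Δt) ≤ min(S̄_t, α S̄_{t-1} + x̄_t Δt) holds along the greedy trajectories. -/

import Mathlib

/-- The recursive storage state. -/
def stateOf {d : ℕ} (α Δt Sinit : ℝ) (x : Fin d → ℝ) : ℕ → ℝ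
  | 0 => Sinit
  | t + 1 => α * stateOf α Δt Sinit x t + (if h : t < d then x ⟨t, h⟩ else 0) * Δt

/-- Auxiliary backward recursion (with fuel) for the minimal needed storage level. -/
noncomputable def needAux (α Δt : ℝ) {d : ℕ} (xhi : Fin d → ℝ) (Slo : ℕ → ℝ) : ℕ → ℕ → ℝ
  | t, 0 => Slo t
  | t, k + 1 => max (Slo t)
      ((needAux α Δt xhi Slo (t + 1) k - (if h : t < d then xhi ⟨t, h⟩ else 0) * Δt) / α)

/-- Minimal storage level at time `t` needed to satisfy all future lower bounds. -/
noncomputable def need (α Δt : ℝ) {d : ℕ} (xhi : Fin d → ℝ) (Slo : ℕ → ℝ) (t : ℕ) : ℝ :=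
  needAux α Δt xhi Slo t (d - t)

/-- Forward trajectory: charge minimally but always at least to the needed level. -/
noncomputable def traj (α Δt Sinit : ℝ) {d : ℕ} (xlo : Fin d → ℝ) (N : ℕ → ℝ) : ℕ → ℝ
  | 0 => Sinit
  | t + 1 => max (N (t + 1))
      (α * traj α Δt Sinit xlo N t + (if h : t < d then xlo ⟨t, h⟩ else 0) * Δt)

/-- The storage feasible set is nonempty iff the greedy maximal trajectory satisfies all
lower energy bounds and the greedy minimal trajectory satisfies all upper energy bounds,
under `x̲ ≤ x̄` and consistency of the interval bounds. -/
theorem storage_feasible_nonempty_iff_greedy (d : ℕ) (Δt α Sinit : ℝ)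
    (hΔt : 0 < Δt) (hα : α ∈ Set.Ioc (0 : ℝ) 1)
    (xlo xhi : Fin d → ℝ) (hx : ∀ t, xlo t ≤ xhi t)
    (Slo Shi : ℕ → ℝ)
    (hconsistent : ∀ t : Fin d,
      max (Slo ((t : ℕ) + 1)) (α * Slo (t : ℕ) + xlo t * Δt) ≤
        min (Shi ((t : ℕ) + 1)) (α * Shi (t : ℕ) + xhi t * Δt))
    (Splus Sminus : ℕ → ℝ)
    (hSplus0 : Splus 0 = Sinit) (hSminus0 : Sminus 0 = Sinit)
    (hSplus : ∀ t : Fin d, Splus ((t : ℕ) + 1) =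
      min (Shi ((t : ℕ) + 1)) (α * Splus (t : ℕ) + xhi t * Δt))
    (hSminus : ∀ t : Fin d, Sminus ((t : ℕ) + 1) =
      max (Slo ((t : ℕ) + 1)) (α * Sminus (t : ℕ) + xlo t * Δt)) :
    {x : Fin d → ℝ |
        (∀ t, xlo t ≤ x t ∧ x t ≤ xhi t) ∧
        (∀ t ≤ d, Slo t ≤ stateOf α Δt Sinit x t ∧ stateOf α Δt Sinit x t ≤ Shi t)}.Nonempty
      ↔ (∀ t ≤ d, Slo t ≤ Splus t ∧ Sminus t ≤ Shi t) := by
  obtain ⟨hα0, hα1⟩ := hα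
  have hΔne : Δt ≠ 0 := ne_of_gt hΔt
  constructor
  · -- Necessity
    rintro ⟨x, hxb, hxs⟩
    have key : ∀ t ≤ d, Sminus t ≤ stateOf α Δt Sinit x t ∧ stateOf α Δt Sinit x t ≤ Splus t := by
      intro t
      induction t with
      | zero => intro _; simp [stateOf, hSminus0, hSplus0]
      | succ n ih =>
        intro hn
        have hnd : n < d := hn
        obtain ⟨ih1, ih2⟩ := ih (le_of_lt hnd)
        have hst : stateOf α Δt Sinit x (n + 1)
            = α * stateOf α Δt Sinit x n + x ⟨n, hnd⟩ * Δt := by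
          simp [stateOf, hnd]
        obtain ⟨hb1, hb2⟩ := hxb ⟨n, hnd⟩
        obtain ⟨he1, he2⟩ := hxs (n + 1) hn
        constructor
        · rw [hSminus ⟨n, hnd⟩]
          apply max_le he1
          rw [hst]
          have := mul_le_mul_of_nonneg_left ih1 (le_of_lt hα0)
          nlinarith
        · rw [hSplus ⟨n, hnd⟩]
          apply le_min he2
          rw [hst]
          have := mul_le_mul_of_nonneg_left ih2 (le_of_lt hα0)
          nlinarith
    intro t ht
    obtain ⟨h1, h2⟩ := hxs t ht
    obtain ⟨k1, k2⟩ := key t ht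
    exact ⟨le_trans h1 k2, le_trans k1 h2⟩
  · -- Sufficiency
    intro hG
    set N : ℕ → ℝ := need α Δt xhi Slo with hN
    have hNd : N d = Slo d := by
      simp [hN, need, needAux]
    have hNlt : ∀ t (h : t < d),
        N t = max (Slo t) ((N (t + 1) - xhi ⟨t, h⟩ * Δt) / α) := by
      intro t h
      have h1 : d - t = (d - (t + 1)) + 1 := by omega
      simp only [hN, need, h1, needAux, h, dif_pos]
    -- Slo ≤ N
    have hSloN : ∀ t ≤ d, Slo t ≤ N t := by
      intro t ht
      rcases eq_or_lt_of_le ht with rfl | hlt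
      · exact le_of_eq hNd.symm
      · rw [hNlt t hlt]; exact le_max_left _ _
    -- N ≤ Splus (backward induction via fuel)
    have hNSp : ∀ k, ∀ t, t + k = d → N t ≤ Splus t := by
      intro k
      induction k with
      | zero =>
        intro t ht
        have ht' : t = d := by omega
        rw [ht', hNd]
        exact (hG d le_rfl).1
      | succ m ih =>
        intro t ht
        have hlt : t < d := by omega
        rw [hNlt t hlt]
        apply max_le
        · exact (hG t (le_of_lt hlt)).1
        · rw [div_le_iff₀ hα0]
          have h1 : N (t + 1) ≤ Splus (t + 1) := ih (t + 1) (by omega)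
          have h2 : Splus (t + 1) ≤ α * Splus t + xhi ⟨t, hlt⟩ * Δt := by
            rw [hSplus ⟨t, hlt⟩]; exact min_le_right _ _
          nlinarith
    have hNSplus : ∀ t ≤ d, N t ≤ Splus t := fun t ht => hNSp (d - t) t (by omega)
    -- Slo ≤ Sminus
    have hSloSm : ∀ t ≤ d, Slo t ≤ Sminus t := by
      intro t ht
      cases t with
      | zero => rw [hSminus0, ← hSplus0]; exact (hG 0 (Nat.zero_le d)).1
      | succ n =>
        have hnd : n < d := ht
        rw [hSminus ⟨n, hnd⟩]; exact le_max_left _ _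
    set T : ℕ → ℝ := traj α Δt Sinit xlo N with hT
    have hT0 : T 0 = Sinit := rfl
    have hTsucc : ∀ t (h : t < d),
        T (t + 1) = max (N (t + 1)) (α * T t + xlo ⟨t, h⟩ * Δt) := by
      intro t h
      simp [hT, traj, h]
    -- main invariants
    have inv : ∀ t ≤ d, N t ≤ T t ∧ T t ≤ max (Sminus t) (N t) ∧ T t ≤ Shi t := by
      intro t
      induction t with
      | zero =>
        intro _
        refine ⟨?_, ?_, ?_⟩
        · rw [hT0, ← hSplus0]; exact hNSplus 0 (Nat.zero_le d)
        · rw [hT0, ← hSminus0]; exact le_max_left _ _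
        · rw [hT0, ← hSminus0]; exact (hG 0 (Nat.zero_le d)).2
      | succ n ih =>
        intro hn
        have hnd : n < d := hn
        obtain ⟨i1, i2, i3⟩ := ih (le_of_lt hnd)
        rw [hTsucc n hnd]
        have hSm' : Sminus (n + 1) = max (Slo (n + 1)) (α * Sminus n + xlo ⟨n, hnd⟩ * Δt) :=
          hSminus ⟨n, hnd⟩
        have hSp' : Splus (n + 1) = min (Shi (n + 1)) (α * Splus n + xhi ⟨n, hnd⟩ * Δt) :=
          hSplus ⟨n, hnd⟩
        have hSpShi : Splus (n + 1) ≤ Shi (n + 1) := by rw [hSp']; exact min_le_left _ _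
        have hNShi : N (n + 1) ≤ Shi (n + 1) := le_trans (hNSplus (n + 1) hn) hSpShi
        -- bound the second component
        have hstep : α * T n + xlo ⟨n, hnd⟩ * Δt ≤ max (Sminus (n + 1)) (N (n + 1)) ∧
            α * T n + xlo ⟨n, hnd⟩ * Δt ≤ Shi (n + 1) := by
          rcases le_or_gt (T n) (Sminus n) with hc | hc
          · have h1 : α * T n + xlo ⟨n, hnd⟩ * Δt ≤ Sminus (n + 1) := by
              rw [hSm']
              have := mul_le_mul_of_nonneg_left hc (le_of_lt hα0)
              have h2 : α * Sminus n + xlo ⟨n, hnd⟩ * Δt ≤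
                  max (Slo (n + 1)) (α * Sminus n + xlo ⟨n, hnd⟩ * Δt) := le_max_right _ _
              linarith
            exact ⟨le_trans h1 (le_max_left _ _), le_trans h1 ((hG (n + 1) hn).2)⟩
          · -- T n ≤ N n (from i2)
            have hTN : T n ≤ N n := by
              rcases le_total (Sminus n) (N n) with hmn | hmn
              · exact le_trans i2 (max_le hmn le_rfl)
              · exact absurd (le_trans i2 (max_le le_rfl hmn)) (not_le.mpr hc)
            rw [hNlt n hnd] at hTN
            rcases le_total ((N (n + 1) - xhi ⟨n, hnd⟩ * Δt) / α) (Slo n) with hcc | hcc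
            · -- N n = Slo n ≤ Sminus n, so T n ≤ Sminus n
              have hTn : T n ≤ Slo n := by
                rw [max_eq_left hcc] at hTN; exact hTN
              have hTSm : T n ≤ Sminus n := le_trans hTn (hSloSm n (le_of_lt hnd))
              have h1 : α * T n + xlo ⟨n, hnd⟩ * Δt ≤ Sminus (n + 1) := by
                rw [hSm']
                have := mul_le_mul_of_nonneg_left hTSm (le_of_lt hα0)
                have h2 : α * Sminus n + xlo ⟨n, hnd⟩ * Δt ≤
                    max (Slo (n + 1)) (α * Sminus n + xlo ⟨n, hnd⟩ * Δt) := le_max_right _ _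
                linarith
              exact ⟨le_trans h1 (le_max_left _ _), le_trans h1 ((hG (n + 1) hn).2)⟩
            · have hTn : T n ≤ (N (n + 1) - xhi ⟨n, hnd⟩ * Δt) / α := by
                rw [max_eq_right hcc] at hTN; exact hTN
              rw [le_div_iff₀ hα0] at hTn
              have hxx : xlo ⟨n, hnd⟩ ≤ xhi ⟨n, hnd⟩ := hx _
              have h1 : α * T n + xlo ⟨n, hnd⟩ * Δt ≤ N (n + 1) := by nlinarith
              exact ⟨le_trans h1 (le_max_right _ _), le_trans h1 hNShi⟩
        refine ⟨le_max_left _ _, ?_, ?_⟩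
        · apply max_le
          · exact le_max_right _ _
          · exact hstep.1
        · exact max_le hNShi hstep.2
    -- the witness control
    refine ⟨fun t => (T ((t : ℕ) + 1) - α * T (t : ℕ)) / Δt, ?_, ?_⟩
    · intro t
      have htd : (t : ℕ) < d := t.isLt
      have hTs := hTsucc (t : ℕ) htd
      have ht2 : (⟨(t : ℕ), htd⟩ : Fin d) = t := by
        apply Fin.ext; rfl
      rw [ht2] at hTs
      constructor
      · rw [le_div_iff₀ hΔt, hTs]
        have := le_max_right (N ((t : ℕ) + 1)) (α * T (t : ℕ) + xlo t * Δt)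
        linarith
      · rw [div_le_iff₀ hΔt]
        have hb : T ((t : ℕ) + 1) ≤ α * T (t : ℕ) + xhi t * Δt := by
          rw [hTs]
          apply max_le
          · have h1 : (N ((t : ℕ) + 1) - xhi t * Δt) / α ≤ N (t : ℕ) := by
              rw [hNlt (t : ℕ) htd, ht2]; exact le_max_right _ _
            rw [div_le_iff₀ hα0] at h1
            have h2 : N (t : ℕ) ≤ T (t : ℕ) := (inv (t : ℕ) (le_of_lt htd)).1
            nlinarith
          · have := hx t
            nlinarith
        linarith
    · -- state equals T, within bounds
      have hstate : ∀ t ≤ d, stateOf α Δt Sinit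
          (fun t : Fin d => (T ((t : ℕ) + 1) - α * T (t : ℕ)) / Δt) t = T t := by
        intro t
        induction t with
        | zero => intro _; simp [stateOf, hT0]
        | succ n ih =>
          intro hn
          have hnd : n < d := hn
          have hih := ih (le_of_lt hnd)
          simp only [stateOf, hnd, dif_pos, hih]
          field_simp
          ring
      intro t ht
      rw [hstate t ht]
      obtain ⟨i1, _, i3⟩ := inv t ht
      exact ⟨le_trans (hSloN t ht) i1, i3⟩
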